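/- For the three-population Kuramoto model, the Floquet matrix of the torus SSD is L^SSD = diag(−4r₀ + 2K, −4r₀ − 2K, −4r₀): with θ₀ = E^SSD(0) = (0, 0, 0, 0, 0, π) and N : ℝ³ → ℝ⁶ given by N v = (−v₁, v₁, −v₂, v₂, −v₃, v₃), one has (fderiv ℝ H θ₀)(N v) = N((−4r₀ + 2K) v₁, (−4r₀ − 2K) v₂, −4r₀ v₃) for all v ∈ ℝ³. -/

import Mathlib

open Real

/-- Pairwise within-population coupling `g₂(ϑ) = sin(ϑ + π/2) − r₀ sin(2(ϑ + π/2))`. -/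
noncomputable def g2 (r0 ϑ : ℝ) : ℝ :=
  Real.sin (ϑ + π / 2) - r0 * Real.sin (2 * (ϑ + π / 2))

/-- Nonpairwise coupling `g₄(ϑ) = sin(ϑ + π)`. -/
noncomputable def g4 (ϑ : ℝ) : ℝ := Real.sin (ϑ + π)

/-- `G₄(θ_τ; ϕ) = (1/4) Σ_{p,q} g₄(θ_{τ,p} − θ_{τ,q} + ϕ)`. -/
noncomputable def G4 (θτ : Fin 2 → ℝ) (ϕ : ℝ) : ℝ :=
  (1 / 4) * ∑ p : Fin 2, ∑ q : Fin 2, g4 (θτ p - θτ q + ϕ)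

/-- The vector field of the three-population Kuramoto model: a state is
`θ : Fin 3 → Fin 2 → ℝ` (population `σ`, oscillator `k`), and
`H_{σ,k}(θ) = ω + g₂(θ_{σ,3−k} − θ_{σ,k}) − K G₄(θ_{σ−1}; θ_{σ,3−k} − θ_{σ,k})
  + K G₄(θ_{σ+1}; θ_{σ,3−k} − θ_{σ,k})`,
with population indices mod 3 and the other oscillator indexed by `k + 1` mod 2. -/
noncomputable def kuramotoH (ω K r0 : ℝ) (θ : Fin 3 → Fin 2 → ℝ) : Fin 3 → Fin 2 → ℝ :=
  fun σ k =>
    ω + g2 r0 (θ σ (k + 1) - θ σ k)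
      - K * G4 (θ (σ - 1)) (θ σ (k + 1) - θ σ k)
      + K * G4 (θ (σ + 1)) (θ σ (k + 1) - θ σ k)

/-- The phase-shift action `R : ℝ³ → ℝ⁶`, `Rφ = (φ₁, φ₁, φ₂, φ₂, φ₃, φ₃)`. -/
def kuramotoR (φ : Fin 3 → ℝ) : Fin 3 → Fin 2 → ℝ := fun σ _ => φ σ

/-- The embedding of the SSD torus: `E^SSD(φ) = (φ₁, φ₁, φ₂, φ₂, φ₃, φ₃+π)`. -/
noncomputable def ESSD (φ : Fin 3 → ℝ) : Fin 3 → Fin 2 → ℝ :=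
  fun σ k => φ σ + if σ = 2 ∧ k = 1 then π else 0

/-- The normal directions: `N v = (−v₁, v₁, −v₂, v₂, −v₃, v₃)`. -/
def kuramotoN (v : Fin 3 → ℝ) : Fin 3 → Fin 2 → ℝ :=
  fun σ k => if k = 0 then -v σ else v σ

lemma hasDerivAt_g2_comp (r0 : ℝ) {u : ℝ → ℝ} {u' t : ℝ} (hu : HasDerivAt u u' t) :
    HasDerivAt (fun s => g2 r0 (u s))
      ((Real.cos (u t + π/2) - r0 * (2 * Real.cos (2 * (u t + π/2)))) * u') t := by
  unfold g2
  have h1 : HasDerivAt (fun s => Real.sin (u s + π/2)) (Real.cos (u t + π/2) * u') t :=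
    (hu.add_const _).sin
  have h2 : HasDerivAt (fun s => Real.sin (2 * (u s + π/2)))
      (Real.cos (2*(u t+π/2)) * (2*u')) t :=
    ((hu.add_const (π/2)).const_mul 2).sin
  have h := h1.sub (h2.const_mul r0)
  refine h.congr_deriv ?_; ring

lemma hasDerivAt_G4_comp {θ : ℝ → Fin 2 → ℝ} {θ' : Fin 2 → ℝ} {φ : ℝ → ℝ} {φ' t : ℝ}
    (hθ : ∀ p, HasDerivAt (fun s => θ s p) (θ' p) t) (hφ : HasDerivAt φ φ' t) :
    HasDerivAt (fun s => G4 (θ s) (φ s))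
      ((1/4) * ∑ p : Fin 2, ∑ q : Fin 2,
        Real.cos (θ t p - θ t q + φ t + π) * (θ' p - θ' q + φ')) t := by
  unfold G4 g4
  apply HasDerivAt.const_mul
  apply HasDerivAt.fun_sum; intro p _
  exact HasDerivAt.fun_sum fun q _ => ((((hθ p).sub (hθ q)).add hφ).add_const π).sin

lemma hasDerivAt_H_comp (ω K r0 : ℝ) {γ : ℝ → Fin 3 → Fin 2 → ℝ}
    {γ' : Fin 3 → Fin 2 → ℝ} {t : ℝ}
    (hγ : ∀ τ j, HasDerivAt (fun s => γ s τ j) (γ' τ j) t) (σ : Fin 3) (k : Fin 2) :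
    HasDerivAt (fun s => kuramotoH ω K r0 (γ s) σ k)
      ((Real.cos ((γ t σ (k+1) - γ t σ k) + π/2)
          - r0 * (2 * Real.cos (2 * ((γ t σ (k+1) - γ t σ k) + π/2))))
            * (γ' σ (k+1) - γ' σ k)
        - K * ((1/4) * ∑ p : Fin 2, ∑ q : Fin 2,
            Real.cos (γ t (σ-1) p - γ t (σ-1) q + (γ t σ (k+1) - γ t σ k) + π)
              * (γ' (σ-1) p - γ' (σ-1) q + (γ' σ (k+1) - γ' σ k)))
        + K * ((1/4) * ∑ p : Fin 2, ∑ q : Fin 2,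
            Real.cos (γ t (σ+1) p - γ t (σ+1) q + (γ t σ (k+1) - γ t σ k) + π)
              * (γ' (σ+1) p - γ' (σ+1) q + (γ' σ (k+1) - γ' σ k)))) t := by
  unfold kuramotoH
  have hφ : HasDerivAt (fun s => γ s σ (k+1) - γ s σ k) (γ' σ (k+1) - γ' σ k) t :=
    (hγ σ (k+1)).sub (hγ σ k)
  exact (((hasDerivAt_g2_comp r0 hφ).const_add ω).sub
    ((hasDerivAt_G4_comp (fun p => hγ (σ-1) p) hφ).const_mul K)).add
    ((hasDerivAt_G4_comp (fun p => hγ (σ+1) p) hφ).const_mul K)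


/-- The Floquet matrix of the torus SSD is
`L^SSD = diag(−4r₀ + 2K, −4r₀ − 2K, −4r₀)`: with `θ₀ = E^SSD(0) = (0,0,0,0,0,π)`,
the Jacobian of `H` at `θ₀` satisfies `DH(θ₀)(N v) = N(L^SSD v)` for all `v ∈ ℝ³`. -/
theorem kuramoto_SSD_floquet (ω K r0 : ℝ) :
    ∀ v : Fin 3 → ℝ,
      (fderiv ℝ (kuramotoH ω K r0) (ESSD 0)) (kuramotoN v)
        = kuramotoN ![(-4 * r0 + 2 * K) * v 0, (-4 * r0 - 2 * K) * v 1, (-4 * r0) * v 2] := by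
  intro v
  have hdiff : Differentiable ℝ (kuramotoH ω K r0) := by
    apply differentiable_pi.mpr; intro σ
    apply differentiable_pi.mpr; intro k
    unfold kuramotoH g2 G4 g4
    fun_prop
  set w := kuramotoN v with hw
  set γ : ℝ → Fin 3 → Fin 2 → ℝ := fun t σ k => ESSD 0 σ k + t * w σ k with hγdef
  have hγ0 : γ 0 = ESSD 0 := by funext σ k; simp [hγdef]
  have hγ : ∀ τ j, HasDerivAt (fun s => γ s τ j) (w τ j) 0 := by
    intro τ j
    simpa [hγdef] using (((hasDerivAt_id (0:ℝ)).mul_const (w τ j)).const_add (ESSD 0 τ j))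
  have hγpi : HasDerivAt γ w 0 := by
    rw [hasDerivAt_pi]; intro τ; rw [hasDerivAt_pi]; intro j; exact hγ τ j
  have hcomp : HasDerivAt (fun t => kuramotoH ω K r0 (γ t))
      ((fderiv ℝ (kuramotoH ω K r0) (ESSD 0)) w) 0 := by
    have h : HasFDerivAt (kuramotoH ω K r0) (fderiv ℝ (kuramotoH ω K r0) (ESSD 0)) (γ 0) := by
      rw [hγ0]; exact (hdiff (ESSD 0)).hasFDerivAt
    exact h.comp_hasDerivAt 0 hγpi
  have hcomp2 : HasDerivAt (fun t => kuramotoH ω K r0 (γ t))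
      (kuramotoN ![(-4 * r0 + 2 * K) * v 0, (-4 * r0 - 2 * K) * v 1, (-4 * r0) * v 2]) 0 := by
    rw [hasDerivAt_pi]; intro σ; rw [hasDerivAt_pi]; intro k
    have hneg : (-1 : Fin 3) = 2 := by decide
    have h := hasDerivAt_H_comp ω K r0 hγ σ k
    refine h.congr_deriv (Eq.symm ?_)
    fin_cases σ <;> fin_cases k <;>
      simp [hγdef, hw, ESSD, kuramotoN, Fin.sum_univ_two,
        Matrix.cons_val_zero, Matrix.cons_val_one, Matrix.head_cons,
        hneg,
        Real.cos_two_mul, Real.cos_add, Real.sin_add, Real.cos_pi, Real.sin_pi,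
        Real.cos_pi_div_two, Real.sin_pi_div_two] <;>
      ring
  exact hcomp2.unique hcomp ▸ rfl
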